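/- For every γ ∈ (0, 1) and every a > 0 there exist constants C > 0 and ε₀ > 0 such that for all ε ∈ (0, ε₀) and all integers M ≥ C·ε^{−2D−a}, with q^{⊗M}-probability at least 1 − γ over the synthetic points (z_1,…,z_M) the following holds: for every N ≥ 1 and every x_1,…,x_N ∈ S, the distance of the empirical kernel mean embedding to the synthetic-data subspace satisfies inf_{h ∈ span{Φ(z_1),…,Φ(z_M)}} ‖(1/N) ∑_{n=1}^N Φ(x_n) − h‖ < ε. -/

import Mathlib

open MeasureTheory
open scoped RealInnerProductSpace

open MeasureTheory Metric Set
open scoped ENNReal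

/-- Existence of a quantitative net: a finite set `T ⊆ S` covering `S` by `ρ`-balls,
with cardinality bound coming from the measure lower bound on small balls. -/
theorem net_lemma {X : Type*} [MetricSpace X] [MeasurableSpace X] [OpensMeasurableSpace X]
    (S : Set X) (q : Measure X) [IsProbabilityMeasure q]
    (ρ w : ℝ) (hρ : 0 < ρ) (hw : 0 < w)
    (hq : ∀ t ∈ S, ENNReal.ofReal w ≤ q (ball t (ρ / 2))) :
    ∃ T : Finset X, ↑T ⊆ S ∧ (S ⊆ ⋃ t ∈ T, ball t ρ) ∧ (T.card : ℝ) * w ≤ 1 := by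
  -- maximal ρ-separated subset of S
  obtain ⟨T₀, hT₀⟩ := zorn_subset {T : Set X | T ⊆ S ∧ T.Pairwise fun x y => ρ ≤ dist x y}
    (fun c hc hchain => ⟨⋃₀ c, ⟨fun x hx => by
        obtain ⟨A, hA, hxA⟩ := hx; exact (hc hA).1 hxA,
      fun x hx y hy hxy => by
        obtain ⟨A, hA, hxA⟩ := hx; obtain ⟨B, hB, hyB⟩ := hy
        rcases hchain.total hA hB with h | h
        · exact (hc hB).2 (h hxA) hyB hxy
        · exact (hc hA).2 hxA (h hyB) hxy⟩,
      fun s hs => subset_sUnion_of_mem hs⟩)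
  obtain ⟨⟨hT₀S, hsep⟩, hmax⟩ := hT₀
  -- card bound for finite subsets
  have hcard : ∀ F : Finset X, ↑F ⊆ T₀ → (F.card : ℝ) * w ≤ 1 := by
    intro F hF
    have hdisj : (↑F : Set X).PairwiseDisjoint fun t => ball t (ρ / 2) := by
      intro x hx y hy hxy
      exact ball_disjoint_ball (by
        have := hsep (hF hx) (hF hy) hxy; linarith)
    have h1 : ∑ t ∈ F, q (ball t (ρ / 2)) ≤ 1 := by
      rw [← measure_biUnion_finset hdisj fun t _ => measurableSet_ball]
      exact prob_le_one
    have h2 : (F.card : ℝ≥0∞) * ENNReal.ofReal w ≤ 1 := by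
      calc (F.card : ℝ≥0∞) * ENNReal.ofReal w = ∑ _t ∈ F, ENNReal.ofReal w := by
            rw [Finset.sum_const, nsmul_eq_mul]
        _ ≤ ∑ t ∈ F, q (ball t (ρ / 2)) :=
            Finset.sum_le_sum fun t ht => hq t (hT₀S (hF ht))
        _ ≤ 1 := h1
    have := h2
    rw [← ENNReal.ofReal_natCast, ← ENNReal.ofReal_mul (by positivity), ← ENNReal.ofReal_one,
      ENNReal.ofReal_le_ofReal_iff zero_le_one] at this
    exact this
  -- T₀ finite
  have hfin : T₀.Finite := by
    by_contra hinf
    obtain ⟨t, htT, htfin, htcard⟩ :=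
      Set.Infinite.exists_subset_ncard_eq hinf (⌈w⁻¹⌉₊ + 1)
    have := hcard htfin.toFinset (by simpa using htT)
    rw [Set.ncard_eq_toFinset_card t htfin] at htcard
    rw [htcard] at this
    have h1 : (⌈w⁻¹⌉₊ + 1 : ℝ) * w ≤ 1 := by exact_mod_cast this
    have h2 : w⁻¹ < (⌈w⁻¹⌉₊ + 1 : ℝ) := by
      have := Nat.le_ceil w⁻¹; push_cast; linarith
    have h3 : w⁻¹ * w < (⌈w⁻¹⌉₊ + 1 : ℝ) * w := mul_lt_mul_of_pos_right h2 hw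
    rw [inv_mul_cancel₀ hw.ne'] at h3
    linarith
  refine ⟨hfin.toFinset, by simpa using hT₀S, ?_, by
    simpa using hcard hfin.toFinset (by simp)⟩
  -- covering property from maximality
  intro x hxS
  by_contra hx
  simp only [Set.mem_iUnion, Set.Finite.mem_toFinset, mem_ball, not_exists, not_and, not_lt] at hx
  have hxT : x ∉ T₀ := fun h => by
    have := hx x (by simpa using h)
    simp at this; linarith
  have : insert x T₀ ∈ {T : Set X | T ⊆ S ∧ T.Pairwise fun x y => ρ ≤ dist x y} := by
    refine ⟨Set.insert_subset hxS hT₀S, ?_⟩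
    intro u hu v hv huv
    rcases hu with rfl | hu
    · rcases hv with rfl | hv
      · exact absurd rfl huv
      · exact hx v (by simpa using hv)
    · rcases hv with rfl | hv
      · rw [dist_comm]; exact hx u (by simpa using hu)
      · exact hsep hu hv huv
  exact hxT (hmax this (Set.subset_insert x T₀) (Set.mem_insert x T₀))


set_option maxHeartbeats 2000000 in
/-- Quantitative projection-error bound for Algorithm 1: with a Lipschitz
kernel and a sampling distribution whose balls on `S` satisfy
`q(B(x,r)) ≥ c·r^D`, for every `γ ∈ (0,1)` and `a > 0` there are `C > 0`
and `ε₀ > 0` such that for all `ε ∈ (0,ε₀)` and `M ≥ C·ε^{-2D-a}`, with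
probability at least `1 − γ` over the `M` i.i.d. synthetic points, every
empirical kernel mean embedding of points of `S` is within `ε` of the span of
the feature maps of the synthetic points. -/
theorem stmt_13 (D : ℕ) (hD : 1 ≤ D)
    (S : Set (EuclideanSpace ℝ (Fin D))) (hS : Bornology.IsBounded S)
    {H : Type*} [NormedAddCommGroup H] [InnerProductSpace ℝ H] [CompleteSpace H]
    (Φ : EuclideanSpace ℝ (Fin D) → H) (L : ℝ) (hL : 0 < L)
    (hLip : ∀ x y : EuclideanSpace ℝ (Fin D),
      |⟪Φ x, Φ y⟫ - ⟪Φ x, Φ x⟫| ≤ L * ‖x - y‖)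
    (q : Measure (EuclideanSpace ℝ (Fin D))) [IsProbabilityMeasure q]
    (c : ℝ) (hc : 0 < c)
    (hball : ∀ x ∈ S, ∀ r : ℝ, 0 < r → r ≤ 1 →
      ENNReal.ofReal (c * r ^ D) ≤ q (Metric.ball x r))
    (γ : ℝ) (hγ0 : 0 < γ) (hγ1 : γ < 1) (a : ℝ) (ha : 0 < a) :
    ∃ C : ℝ, 0 < C ∧ ∃ ε₀ : ℝ, 0 < ε₀ ∧
      ∀ ε : ℝ, 0 < ε → ε < ε₀ → ∀ M : ℕ,
        C * ε ^ (-(2 * (D : ℝ) + a)) ≤ (M : ℝ) →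
        1 - ENNReal.ofReal γ ≤
          Measure.pi (fun _ : Fin M => q)
            {z : Fin M → EuclideanSpace ℝ (Fin D) |
              ∀ N : ℕ, 1 ≤ N → ∀ x : Fin N → EuclideanSpace ℝ (Fin D),
                (∀ n, x n ∈ S) →
                Metric.infDist ((1 / (N : ℝ)) • ∑ n, Φ (x n))
                  (Submodule.span ℝ (Set.range fun m => Φ (z m)) : Set H)
                  < ε} := by
  rcases S.eq_empty_or_nonempty with hSe | ⟨s₀, hs₀⟩
  · -- trivial case: S empty
    refine ⟨1, one_pos, 1, one_pos, fun ε hε0 hε1 M hM => ?_⟩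
    have hset : {z : Fin M → EuclideanSpace ℝ (Fin D) |
        ∀ N : ℕ, 1 ≤ N → ∀ x : Fin N → EuclideanSpace ℝ (Fin D),
          (∀ n, x n ∈ S) →
          Metric.infDist ((1 / (N : ℝ)) • ∑ n, Φ (x n))
            (Submodule.span ℝ (Set.range fun m => Φ (z m)) : Set H) < ε} = Set.univ := by
      ext z
      simp only [Set.mem_setOf_eq, Set.mem_univ, iff_true]
      intro N hN x hx
      have : x ⟨0, hN⟩ ∈ S := hx _
      rw [hSe] at this
      exact absurd this (Set.notMem_empty _)
    rw [hset, measure_univ]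
    exact tsub_le_self
  -- main case
  set A : ℝ := c / (8 * L) ^ D with hA_def
  set B : ℝ := (16 * L) ^ D / (c * γ) with hB_def
  have hA : 0 < A := by positivity
  have hB : 0 < B := by positivity
  refine ⟨(max (Real.log B) 0 + 2 * D / a + 1) / A, by positivity,
    min 1 (2 * Real.sqrt L), by positivity, fun ε hε0 hεε₀ M hM => ?_⟩
  set C : ℝ := (max (Real.log B) 0 + 2 * D / a + 1) / A with hC_def
  have hC : 0 < C := by positivity
  have hε1 : ε < 1 := lt_of_lt_of_le hεε₀ (min_le_left _ _)
  have hεL : ε < 2 * Real.sqrt L := lt_of_lt_of_le hεε₀ (min_le_right _ _)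
  set r : ℝ := ε ^ 2 / (4 * L) with hr_def
  have hr0 : 0 < r := by positivity
  have hr1 : r ≤ 1 := by
    have h4 : Real.sqrt L ^ 2 = L := Real.sq_sqrt hL.le
    have : ε ^ 2 ≤ 4 * L := by nlinarith [Real.sqrt_nonneg L]
    rw [hr_def, div_le_one (by positivity)]
    linarith
  set w : ℝ := c * (r / 4) ^ D with hw_def
  have hw0 : 0 < w := by positivity
  obtain ⟨T, hTS, hTcov, hTcard⟩ := net_lemma S q (r / 2) w (by positivity)
    hw0 (fun t ht => by
      rw [show r / 2 / 2 = r / 4 by ring]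
      exact hball t ht (r / 4) (by positivity) (by linarith))
  set p : ℝ := c * (r / 2) ^ D with hp_def
  have hp0 : 0 < p := by positivity
  have hp1 : p ≤ 1 := by
    have h := (hball s₀ hs₀ (r / 2) (by positivity) (by linarith)).trans
      (prob_le_one (μ := q))
    exact ENNReal.ofReal_le_one.mp h
  set μ := Measure.pi (fun _ : Fin M => q) with hμ_def
  set G : Set (Fin M → EuclideanSpace ℝ (Fin D)) :=
    {z | ∀ t ∈ T, ∃ m, z m ∈ Metric.ball t (r / 2)} with hG_def
  -- the key real arithmetic inequality
  have hkey : (T.card : ℝ) * (1 - p) ^ M ≤ γ := by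
    have hKw : (T.card : ℝ) ≤ w⁻¹ := by
      rw [← mul_le_mul_iff_of_pos_right hw0, inv_mul_cancel₀ hw0.ne']
      exact hTcard
    have hexp : (1 - p) ^ M ≤ Real.exp (-(p * M)) := by
      calc (1 - p) ^ M ≤ Real.exp (-p) ^ M :=
            pow_le_pow_left₀ (by linarith) (by
              have := Real.add_one_le_exp (-p); linarith) M
        _ = Real.exp (-(p * M)) := by
            rw [← Real.exp_nat_mul]; ring_nf
    -- rpow identities
    have hεa1 : (1 : ℝ) ≤ ε ^ (-a) :=
      Real.one_le_rpow_of_pos_of_le_one_of_nonpos hε0 hε1.le (by linarith)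
    have hεa0 : 0 < ε ^ (-a) := by positivity
    have hu : ε ^ (2 * D) * ε ^ (-(2 * (D : ℝ) + a)) = ε ^ (-a) := by
      rw [← Real.rpow_natCast ε (2 * D), ← Real.rpow_add hε0]
      norm_num
    -- lower bound on p * M
    have hpM : (max (Real.log B) 0 + 2 * D / a + 1) * ε ^ (-a) ≤ p * M := by
      have h1 : p * (C * ε ^ (-(2 * (D : ℝ) + a))) ≤ p * M :=
        mul_le_mul_of_nonneg_left hM hp0.le
      have h2 : p = A * ε ^ (2 * D) := by
        have hr2 : r / 2 = ε ^ 2 / (8 * L) := by rw [hr_def]; ring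
        rw [hp_def, hr2, div_pow, ← pow_mul, hA_def]; ring
      have h3 : p * (C * ε ^ (-(2 * (D : ℝ) + a)))
          = (max (Real.log B) 0 + 2 * D / a + 1) * ε ^ (-a) := by
        rw [h2, hC_def, ← hu]
        field_simp
      linarith
    -- log bounds
    have hlogB : Real.log B ≤ max (Real.log B) 0 * ε ^ (-a) := by
      calc Real.log B ≤ max (Real.log B) 0 := le_max_left _ _
        _ = max (Real.log B) 0 * 1 := (mul_one _).symm
        _ ≤ max (Real.log B) 0 * ε ^ (-a) :=
            mul_le_mul_of_nonneg_left hεa1 (le_max_right _ _)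
    have hlogε : -(2 * D) * Real.log ε ≤ (2 * D / a) * ε ^ (-a) := by
      have h1 : Real.log (ε ^ (-a)) ≤ ε ^ (-a) := by
        have := Real.log_le_sub_one_of_pos hεa0; linarith
      rw [Real.log_rpow hε0] at h1
      have h2 : -Real.log ε ≤ ε ^ (-a) / a := by
        rw [le_div_iff₀ ha]; nlinarith
      have h3 : (0:ℝ) ≤ 2 * D := by positivity
      calc -(2 * D) * Real.log ε = 2 * D * (-Real.log ε) := by ring
        _ ≤ 2 * D * (ε ^ (-a) / a) := mul_le_mul_of_nonneg_left h2 h3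
        _ = (2 * D / a) * ε ^ (-a) := by ring
    -- main chain
    have hBe : B * ε ^ (-(2 * (D:ℝ))) ≤ Real.exp (p * M) := by
      have hεpow : ε ^ (-(2 * (D:ℝ))) = Real.exp (-(2 * D) * Real.log ε) := by
        rw [Real.rpow_def_of_pos hε0, mul_comm]
      rw [hεpow, ← Real.exp_log hB, ← Real.exp_add]
      apply Real.exp_le_exp.mpr
      have : Real.log B + -(2 * D) * Real.log ε
          ≤ (max (Real.log B) 0 + 2 * D / a) * ε ^ (-a) := by
        have := add_le_add hlogB hlogε
        linarith [this]
      calc Real.log B + -(2 * D) * Real.log ε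
          ≤ (max (Real.log B) 0 + 2 * D / a) * ε ^ (-a) := this
        _ ≤ (max (Real.log B) 0 + 2 * D / a + 1) * ε ^ (-a) := by
            apply mul_le_mul_of_nonneg_right _ hεa0.le
            linarith
        _ ≤ p * M := hpM
    -- w⁻¹ = B * γ * ε^(-2D)
    have hwinv : w⁻¹ = B * γ * ε ^ (-(2 * (D:ℝ))) := by
      have hε2D : ε ^ (-(2 * (D:ℝ))) = (ε ^ (2 * D))⁻¹ := by
        rw [← Real.rpow_natCast ε (2 * D), ← Real.rpow_neg hε0.le]
        norm_num
      have hr4 : r / 4 = ε ^ 2 / (16 * L) := by rw [hr_def]; ring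
      rw [hw_def, hr4, div_pow, ← pow_mul, hB_def, hε2D]
      have h16 : ((16:ℝ) * L) ^ D ≠ 0 := by positivity
      field_simp
    have hfin : w⁻¹ * Real.exp (-(p * M)) ≤ γ := by
      have hEpos : (0:ℝ) < Real.exp (p * M) := Real.exp_pos _
      have h1 : B * ε ^ (-(2 * (D:ℝ))) / Real.exp (p * M) ≤ 1 :=
        (div_le_one hEpos).mpr hBe
      rw [hwinv, Real.exp_neg]
      calc B * γ * ε ^ (-(2 * (D:ℝ))) * (Real.exp (p * M))⁻¹
          = γ * (B * ε ^ (-(2 * (D:ℝ))) / Real.exp (p * M)) := by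
            rw [div_eq_mul_inv]; ring
        _ ≤ γ * 1 := mul_le_mul_of_nonneg_left h1 hγ0.le
        _ = γ := mul_one γ
    calc (T.card : ℝ) * (1 - p) ^ M
        ≤ w⁻¹ * Real.exp (-(p * M)) := by
          apply mul_le_mul hKw hexp (pow_nonneg (by linarith) M) (by positivity)
      _ ≤ γ := hfin
  -- deterministic part: on the good event, the conclusion holds
  have hdet : G ⊆ {z : Fin M → EuclideanSpace ℝ (Fin D) |
      ∀ N : ℕ, 1 ≤ N → ∀ x : Fin N → EuclideanSpace ℝ (Fin D),
        (∀ n, x n ∈ S) →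
        Metric.infDist ((1 / (N : ℝ)) • ∑ n, Φ (x n))
          (Submodule.span ℝ (Set.range fun m => Φ (z m)) : Set H) < ε} := by
    intro z hz
    intro N hN x hx
    haveI : Nonempty (Fin N) := Fin.pos_iff_nonempty.mp hN
    have h1 : ∀ n : Fin N, ∃ t ∈ T, x n ∈ Metric.ball t (r / 2) := by
      intro n
      simpa [Set.mem_iUnion] using hTcov (hx n)
    choose t htT hxt using h1
    choose m hzm using fun n => hz (t n) (htT n)
    have key : ∀ n, ‖Φ (x n) - Φ (z (m n))‖ < ε := by
      intro n
      have hd1 : dist (x n) (t n) < r / 2 := Metric.mem_ball.mp (hxt n)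
      have hd2 : dist (z (m n)) (t n) < r / 2 := Metric.mem_ball.mp (hzm n)
      have hd : dist (x n) (z (m n)) < r := by
        calc dist (x n) (z (m n)) ≤ dist (x n) (t n) + dist (t n) (z (m n)) :=
              dist_triangle _ _ _
          _ = dist (x n) (t n) + dist (z (m n)) (t n) := by rw [dist_comm (t n)]
          _ < r := by linarith
      have hnorm : ‖x n - z (m n)‖ < r := by rwa [← dist_eq_norm]
      have e1 := abs_le.mp (hLip (x n) (z (m n)))
      have e2 := abs_le.mp (hLip (z (m n)) (x n))
      have hrev : ‖z (m n) - x n‖ = ‖x n - z (m n)‖ := norm_sub_rev _ _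
      rw [hrev] at e2
      have hsq : ‖Φ (x n) - Φ (z (m n))‖ ^ 2 ≤ 2 * L * r := by
        have hexpand : ‖Φ (x n) - Φ (z (m n))‖ ^ 2
            = ‖Φ (x n)‖ ^ 2 - 2 * ⟪Φ (x n), Φ (z (m n))⟫ + ‖Φ (z (m n))‖ ^ 2 :=
          norm_sub_sq_real _ _
        have i1 : ⟪Φ (x n), Φ (x n)⟫ = ‖Φ (x n)‖ ^ 2 := real_inner_self_eq_norm_sq _
        have i2 : ⟪Φ (z (m n)), Φ (z (m n))⟫ = ‖Φ (z (m n))‖ ^ 2 :=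
          real_inner_self_eq_norm_sq _
        have i3 : ⟪Φ (z (m n)), Φ (x n)⟫ = ⟪Φ (x n), Φ (z (m n))⟫ := real_inner_comm _ _
        have b1 : L * ‖x n - z (m n)‖ ≤ L * r := mul_le_mul_of_nonneg_left hnorm.le hL.le
        linarith [e1.1, e2.1]
      have h2Lr : 2 * L * r < ε ^ 2 := by
        have hrr : 2 * L * r = ε ^ 2 / 2 := by
          rw [hr_def]; field_simp; ring
        rw [hrr]; nlinarith
      exact lt_of_pow_lt_pow_left₀ 2 hε0.le (lt_of_le_of_lt hsq h2Lr)
    have hmem : (1 / (N : ℝ)) • ∑ n, Φ (z (m n)) ∈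
        (Submodule.span ℝ (Set.range fun m => Φ (z m)) : Set H) :=
      SetLike.mem_coe.mpr (Submodule.smul_mem _ _ (Submodule.sum_mem _ fun n _ =>
        Submodule.subset_span ⟨m n, rfl⟩))
    refine lt_of_le_of_lt (Metric.infDist_le_dist_of_mem hmem) ?_
    have hNpos : (0 : ℝ) < N := by exact_mod_cast Nat.lt_of_lt_of_le Nat.zero_lt_one hN
    rw [dist_eq_norm, ← smul_sub, ← Finset.sum_sub_distrib, norm_smul]
    have hsum : ∑ n : Fin N, ‖Φ (x n) - Φ (z (m n))‖ < N * ε := by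
      calc ∑ n : Fin N, ‖Φ (x n) - Φ (z (m n))‖ < ∑ _n : Fin N, ε :=
            Finset.sum_lt_sum_of_nonempty Finset.univ_nonempty (fun n _ => key n)
        _ = N * ε := by
            rw [Finset.sum_const, Finset.card_univ, Fintype.card_fin, nsmul_eq_mul]
    have hn1 : ‖(1 / (N : ℝ))‖ = 1 / (N : ℝ) := by
      rw [Real.norm_eq_abs, abs_of_pos (by positivity)]
    calc ‖(1 / (N : ℝ))‖ * ‖∑ n, (Φ (x n) - Φ (z (m n)))‖
        ≤ ‖(1 / (N : ℝ))‖ * ∑ n, ‖Φ (x n) - Φ (z (m n))‖ :=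
          mul_le_mul_of_nonneg_left (norm_sum_le _ _) (norm_nonneg _)
      _ < ‖(1 / (N : ℝ))‖ * (N * ε) := by
          apply mul_lt_mul_of_pos_left hsum
          rw [hn1]; positivity
      _ = ε := by rw [hn1]; field_simp
  -- probability part
  have hprob : μ Gᶜ ≤ ENNReal.ofReal γ := by
    have hsub : Gᶜ ⊆ ⋃ t ∈ T,
        Set.pi Set.univ (fun _ : Fin M => (Metric.ball t (r / 2))ᶜ) := by
      intro z hz
      simp only [hG_def, Set.mem_compl_iff, Set.mem_setOf_eq] at hz
      push_neg at hz
      obtain ⟨t, htT, hzt⟩ := hz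
      refine Set.mem_biUnion htT ?_
      rw [Set.mem_univ_pi]
      intro mm
      exact hzt mm
    have hμbad : ∀ t ∈ T,
        μ (Set.pi Set.univ (fun _ : Fin M => (Metric.ball t (r / 2))ᶜ))
          ≤ ENNReal.ofReal ((1 - p) ^ M) := by
      intro t htT
      rw [hμ_def, Measure.pi_pi]
      have hlow : ENNReal.ofReal p ≤ q (Metric.ball t (r / 2)) := by
        rw [hp_def]
        exact hball t (hTS htT) (r / 2) (by positivity) (by linarith)
      have hq1 : q (Metric.ball t (r / 2))ᶜ ≤ ENNReal.ofReal (1 - p) := by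
        rw [measure_compl measurableSet_ball (measure_ne_top q _)]
        calc q Set.univ - q (Metric.ball t (r / 2)) ≤ 1 - ENNReal.ofReal p := by
              rw [measure_univ]; exact tsub_le_tsub_left hlow 1
          _ = ENNReal.ofReal (1 - p) := by
              rw [ENNReal.ofReal_sub 1 hp0.le, ENNReal.ofReal_one]
      calc ∏ _m : Fin M, q (Metric.ball t (r / 2))ᶜ
          = q (Metric.ball t (r / 2))ᶜ ^ M := by
            rw [Finset.prod_const, Finset.card_univ, Fintype.card_fin]
        _ ≤ ENNReal.ofReal (1 - p) ^ M := pow_le_pow_left₀ zero_le hq1 M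
        _ = ENNReal.ofReal ((1 - p) ^ M) := (ENNReal.ofReal_pow (by linarith) M).symm
    calc μ Gᶜ
        ≤ μ (⋃ t ∈ T, Set.pi Set.univ (fun _ : Fin M => (Metric.ball t (r / 2))ᶜ)) :=
          measure_mono hsub
      _ ≤ ∑ t ∈ T, μ (Set.pi Set.univ fun _ : Fin M => (Metric.ball t (r / 2))ᶜ) :=
          measure_biUnion_finset_le T _
      _ ≤ ∑ _t ∈ T, ENNReal.ofReal ((1 - p) ^ M) := Finset.sum_le_sum hμbad
      _ = (T.card : ℝ≥0∞) * ENNReal.ofReal ((1 - p) ^ M) := by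
          rw [Finset.sum_const, nsmul_eq_mul]
      _ = ENNReal.ofReal ((T.card : ℝ) * (1 - p) ^ M) := by
          rw [ENNReal.ofReal_mul (Nat.cast_nonneg _), ENNReal.ofReal_natCast]
      _ ≤ ENNReal.ofReal γ := ENNReal.ofReal_le_ofReal hkey
  have h1le : (1 : ℝ≥0∞) ≤ μ G + ENNReal.ofReal γ := by
    calc (1 : ℝ≥0∞) = μ (G ∪ Gᶜ) := by rw [Set.union_compl_self]; exact measure_univ.symm
      _ ≤ μ G + μ Gᶜ := measure_union_le G Gᶜ
      _ ≤ μ G + ENNReal.ofReal γ := add_le_add_right hprob _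
  exact le_trans (tsub_le_iff_right.mpr h1le) (measure_mono hdet)
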